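/- Every trace of the set of canonical models of a process P is a trace of P: tracesH(can(P)) ⊆ traces(P), where can(P) is the set of token-added canonical models cmod^•(P, ρ) over all well-typed input schedules ρ. -/

import Mathlib

/-! ## Event systems -/

/-- Event systems: labeled transition systems. -/
structure ES (S E : Type) where
  trans : S → E → S → Prop

namespace ES

/-- Extension of the transition relation to finite sequences of events. -/
inductive mtrans {S E : Type} (M : ES S E) : S → List E → S → Prop
  | nil (s : S) : mtrans M s [] s
  | snoc {s s' s'' : S} {τ : List E} {e : E} :
      mtrans M s τ s' → M.trans s' e s'' → mtrans M s (τ ++ [e]) s''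

/-- The traces of an event system starting from a set of initial states. -/
def traces {S E : Type} (M : ES S E) (I : Set S) : Set (List E) :=
  {τ | ∃ s ∈ I, ∃ s', M.mtrans s τ s'}

/-- Traces starting from a single state. -/
def tracesFrom {S E : Type} (M : ES S E) (s : S) : Set (List E) :=
  M.traces {s}

end ES

/-! ## Chunks and heaps -/

/-- Chunks: I/O permissions `bio(t, v, w, t')` and tokens `token(t)`. -/
inductive Chunk (B V Pl : Type) : Type
  | bio (b : B) (t : Pl) (v w : V) (t' : Pl)
  | token (t : Pl)

/-- Heaps are (possibly infinite) multisets of chunks, i.e. functions to `ℕ∞`. -/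
abbrev Heap (B V Pl : Type) := Chunk B V Pl → ℕ∞

open Classical in
/-- The singleton heap containing one chunk. -/
noncomputable def Heap.single {B V Pl : Type} (c : Chunk B V Pl) : Heap B V Pl :=
  fun c' => if c' = c then 1 else 0

/-- Well-typedness of a chunk w.r.t. a typing function `Ty`. -/
def Chunk.wellTyped {B V Pl : Type} (Ty : B → V → Set V) : Chunk B V Pl → Prop
  | .bio b _ v w _ => w ∈ Ty b v
  | .token _ => True

/-! ## Assertions (coinductive, as an M-type) -/

/-- Heads of the assertion functor. -/
inductive AssnHead (B V Pl : Type) : Type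
  | bool (b : Bool)
  | chunk (c : Chunk B V Pl)
  | star
  | exv
  | expl

/-- Arities (branching types) of the assertion functor. -/
def AssnAr (B V Pl : Type) : AssnHead B V Pl → Type
  | .bool _ => Empty
  | .chunk _ => Empty
  | .star => Bool
  | .exv => V
  | .expl => Pl

/-- The assertion polynomial functor. -/
def AssnF (B V Pl : Type) : PFunctor := ⟨AssnHead B V Pl, AssnAr B V Pl⟩

/-- Coinductive separation logic assertions:
`φ ::=ν b | c | φ₁ ⋆ φ₂ | ∃v. φ | ∃t. φ`. -/
def Assn (B V Pl : Type) : Type := (AssnF B V Pl).M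

namespace Assn

variable {B V Pl : Type}

/-- Boolean assertion. -/
def mkBool (b : Bool) : Assn B V Pl := PFunctor.M.mk ⟨.bool b, fun e => e.elim⟩

/-- Chunk assertion. -/
def mkChunk (c : Chunk B V Pl) : Assn B V Pl := PFunctor.M.mk ⟨.chunk c, fun e => e.elim⟩

/-- Separating conjunction. -/
def star (φ ψ : Assn B V Pl) : Assn B V Pl :=
  PFunctor.M.mk ⟨.star, fun x : Bool => if x then φ else ψ⟩

/-- Existential quantification over values. -/
def exv (f : V → Assn B V Pl) : Assn B V Pl := PFunctor.M.mk ⟨.exv, f⟩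

/-- Existential quantification over places. -/
def expl (f : Pl → Assn B V Pl) : Assn B V Pl := PFunctor.M.mk ⟨.expl, f⟩

end Assn

/-- One step of the satisfaction relation. -/
def SatF {B V Pl : Type} (Ty : B → V → Set V)
    (R : Heap B V Pl → Assn B V Pl → Prop) (h : Heap B V Pl) (φ : Assn B V Pl) : Prop :=
  match PFunctor.M.dest φ with
  | ⟨.bool b, _⟩ => b = true
  | ⟨.chunk c, _⟩ => 0 < h c ∧ c.wellTyped Ty
  | ⟨.star, f⟩ => ∃ h1 h2, h = h1 + h2 ∧ R h1 (f true) ∧ R h2 (f false)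
  | ⟨.exv, f⟩ => ∃ v, R h (f v)
  | ⟨.expl, f⟩ => ∃ t, R h (f t)

/-- Coinductive satisfaction relation `h ⊨ φ`, as the greatest fixed point
of `SatF` (defined as the union of all post-fixed points). -/
def sat {B V Pl : Type} (Ty : B → V → Set V) (h : Heap B V Pl) (φ : Assn B V Pl) : Prop :=
  ∃ R, (∀ h' φ', R h' φ' → SatF Ty R h' φ') ∧ R h φ

/-! ## Heap transition system -/

/-- The heap transition system over `Option Heap` (`none` is the chaotic state ⊥),
with rules Bio, Contradict, and Chaos. -/
inductive HTrans {B V Pl : Type} (Ty : B → V → Set V) :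
    Option (Heap B V Pl) → B × V × V → Option (Heap B V Pl) → Prop
  | bio {b : B} {v w : V} {t t' : Pl} {h : Heap B V Pl} :
      w ∈ Ty b v →
      HTrans Ty (some (Heap.single (.token t) + Heap.single (.bio b t v w t') + h)) (b, v, w)
        (some (Heap.single (.token t') + h))
  | contradict {b : B} {v w w' : V} {t t' : Pl} {h : Heap B V Pl} :
      w ≠ w' → w ∈ Ty b v → w' ∈ Ty b v →
      HTrans Ty (some (Heap.single (.token t) + Heap.single (.bio b t v w t') + h)) (b, v, w')
        none
  | chaos {b : B} {v w : V} : w ∈ Ty b v → HTrans Ty none (b, v, w) none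

/-- The heap transition system as an event system. -/
def hES {B V Pl : Type} (Ty : B → V → Set V) : ES (Option (Heap B V Pl)) (B × V × V) :=
  ⟨HTrans Ty⟩

/-- Traces executable in all heaps of a set of heaps. -/
def tracesH {B V Pl : Type} (Ty : B → V → Set V) (H : Set (Heap B V Pl)) :
    Set (List (B × V × V)) :=
  {τ | ∀ h ∈ H, τ ∈ (hES Ty).tracesFrom (some h)}

/-- Traces of an assertion: traces executable in all its heap models. -/
def tracesHA {B V Pl : Type} (Ty : B → V → Set V) (φ : Assn B V Pl) :
    Set (List (B × V × V)) :=
  tracesH Ty {h | sat Ty h φ}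

/-! ## Processes (coinductive, as an M-type) -/

/-- Heads of the process functor. -/
inductive ProcHead (B V : Type) : Type
  | null
  | pre (b : B) (v : V)
  | choice

/-- Arities of the process functor. -/
def ProcAr (B V : Type) : ProcHead B V → Type
  | .null => Empty
  | .pre _ _ => V
  | .choice => Bool

/-- The process polynomial functor. -/
def ProcF (B V : Type) : PFunctor := ⟨ProcHead B V, ProcAr B V⟩

/-- Coinductive processes: `P ::=ν Null | bio(v, z).P | P₁ ⊕ P₂`. -/
def Proc (B V : Type) : Type := (ProcF B V).M

namespace Proc

variable {B V : Type}

/-- The inactive process. -/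
def null : Proc B V := PFunctor.M.mk ⟨.null, fun e => e.elim⟩

/-- Prefixing with an I/O operation, binding the input in the continuation. -/
def pre (b : B) (v : V) (k : V → Proc B V) : Proc B V := PFunctor.M.mk ⟨.pre b v, k⟩

/-- Binary choice. -/
def choice (P Q : Proc B V) : Proc B V :=
  PFunctor.M.mk ⟨.choice, fun x : Bool => if x then P else Q⟩

end Proc

/-- Operational semantics of processes (rules Pref and Choice). -/
inductive PTrans {B V : Type} (Ty : B → V → Set V) : Proc B V → B × V × V → Proc B V → Prop
  | pref {P : Proc B V} {b : B} {v w : V} {k : V → Proc B V} :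
      w ∈ Ty b v → PFunctor.M.dest P = ⟨.pre b v, k⟩ → PTrans Ty P (b, v, w) (k w)
  | chl {P P' : Proc B V} {a : B × V × V} {f : Bool → Proc B V} :
      PFunctor.M.dest P = ⟨.choice, f⟩ → PTrans Ty (f true) a P' → PTrans Ty P a P'
  | chr {P P' : Proc B V} {a : B × V × V} {f : Bool → Proc B V} :
      PFunctor.M.dest P = ⟨.choice, f⟩ → PTrans Ty (f false) a P' → PTrans Ty P a P'

/-- The process operational semantics as an event system. -/
def pES {B V : Type} (Ty : B → V → Set V) : ES (Proc B V) (B × V × V) := ⟨PTrans Ty⟩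

/-- Countable (ℕ-indexed) choice, defined corecursively from binary choice. -/
def vchoice {B V : Type} (f : ℕ → Proc B V) : Proc B V :=
  PFunctor.M.corec
    (fun s : Proc B V ⊕ ℕ =>
      match s with
      | .inl p => ⟨(PFunctor.M.dest p).1, fun x => Sum.inl ((PFunctor.M.dest p).2 x)⟩
      | .inr n => ⟨.choice, fun x : Bool => if x then Sum.inl (f n) else Sum.inr (n + 1)⟩)
    (Sum.inr 0)

/-! ## Embedding of processes into assertions -/

/-- States of the corecursion defining the embedding `emb`. -/
inductive EmbSt (B V Pl : Type) : Type
  | proc (P : Proc B V) (t : Pl)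
  | ex1 (b : B) (v : V) (k : V → Proc B V) (t t' : Pl)
  | star1 (b : B) (v : V) (k : V → Proc B V) (t t' : Pl) (z : V)
  | leafChunk (c : Chunk B V Pl)

/-- One step of the corecursion defining the embedding `emb`. -/
def embStep {B V Pl : Type} : EmbSt B V Pl → (AssnF B V Pl).Obj (EmbSt B V Pl)
  | .proc P t =>
    match PFunctor.M.dest P with
    | ⟨.null, _⟩ => ⟨.bool true, fun e => e.elim⟩
    | ⟨.pre b v, k⟩ => ⟨.expl, fun t' => .ex1 b v k t t'⟩
    | ⟨.choice, f⟩ => ⟨.star, fun x : Bool => .proc (f x) t⟩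
  | .ex1 b v k t t' => ⟨.exv, fun z => .star1 b v k t t' z⟩
  | .star1 b v k t t' z =>
      ⟨.star, fun x : Bool => if x then .leafChunk (.bio b t v z t') else .proc (k z) t'⟩
  | .leafChunk c => ⟨.chunk c, fun e => e.elim⟩

/-- The embedding `emb(P, t)` of a process and a place into an assertion:
`emb(Null, t) = true`, `emb(bio(v,z).P, t) = ∃t',z'. bio(t,v,z',t') ⋆ emb(P[z'/z], t')`,
`emb(P₁ ⊕ P₂, t) = emb(P₁, t) ⋆ emb(P₂, t)`. -/
def embA {B V Pl : Type} (P : Proc B V) (t : Pl) : Assn B V Pl :=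
  PFunctor.M.corec embStep (.proc P t)

/-- The process assertion `emb(P) = ∃t. token(t) ⋆ emb(P, t)`. -/
def procAssn {B V : Type} (Pl : Type) (P : Proc B V) : Assn B V Pl :=
  Assn.expl (fun t => Assn.star (Assn.mkChunk (.token t)) (embA P t))

/-- ℕ-indexed iterated separating conjunction, defined corecursively. -/
def AllStar {B V Pl : Type} (f : ℕ → Assn B V Pl) : Assn B V Pl :=
  PFunctor.M.corec
    (fun s : Assn B V Pl ⊕ ℕ =>
      match s with
      | .inl a => ⟨(PFunctor.M.dest a).1, fun x => Sum.inl ((PFunctor.M.dest a).2 x)⟩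
      | .inr n => ⟨.star, fun x : Bool => if x then Sum.inl (f n) else Sum.inr (n + 1)⟩)
    (Sum.inr 0)

/-! ## I/O-guarded event systems and their translation to processes -/

/-- An I/O-guarded event system: guards depend only on the state and the output,
updates compute the next state from output and input. -/
structure IOGES (B V S : Type) where
  guard : B → V → S → Prop
  update : B → V → V → S → S

/-- The event system associated with an I/O-guarded event system:
`s →bio(v,w) s'` iff the guard holds, `w ∈ Ty(bio, v)`, and `s' = U(s)`. -/
def IOGES.es {B V S : Type} (G : IOGES B V S) (Ty : B → V → Set V) : ES S (B × V × V) :=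
  ⟨fun s a s' => G.guard a.1 a.2.1 s ∧ a.2.2 ∈ Ty a.1 a.2.1 ∧
      s' = G.update a.1 a.2.1 a.2.2 s⟩

/-- States of the corecursion defining `proc(G, s)`. -/
inductive PrSt (S : Type) : Type
  | spine (n : ℕ) (s : S)
  | item (n : ℕ) (s : S)

open Classical in
/-- The corecursive translation `proc(G, s)` of an I/O-guarded event system into
a process: the countable choice over all `bio ∈ Bios` and outputs `v` whose guard
holds in `s` of the prefixed processes `bio(v, z). proc(G, U_{bio(v,z)}(s))`,
via an enumeration `e` of the pairs `(bio, v)`. -/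
noncomputable def procOf {B V S : Type} (e : ℕ → B × V) (G : IOGES B V S) (s : S) :
    Proc B V :=
  PFunctor.M.corec
    (fun st : PrSt S =>
      match st with
      | .spine n s => ⟨.choice, fun x : Bool => if x then .item n s else .spine (n + 1) s⟩
      | .item n s =>
          if G.guard (e n).1 (e n).2 s then
            ⟨.pre (e n).1 (e n).2, fun w => .spine 0 (G.update (e n).1 (e n).2 w s)⟩
          else ⟨.null, fun x => x.elim⟩)
    (.spine 0 s)

/-! ## Canonical heap models -/

open Classical in
/-- The I/O permission (as a singleton heap, or the empty heap) found at position
`pos` of process `P` under input schedule `ρ`, with previous place `pp`,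
current position `cp`, and traversed trace `τ`. -/
noncomputable def pm {B V : Type} (ρ : List (B × V × V) → B → V → V) :
    Proc B V → List (B × V × V) → List Bool → List Bool → List Bool →
      Heap B V (List Bool)
  | P, τ, pp, cp, [] =>
    (match PFunctor.M.dest P with
     | ⟨.pre b v, _⟩ => Heap.single (Chunk.bio b pp v (ρ τ b v) (cp ++ [true]))
     | _ => 0)
  | P, τ, pp, cp, d :: pos =>
    (match PFunctor.M.dest P, d with
     | ⟨.pre b v, k⟩, true =>
         pm ρ (k (ρ τ b v)) (τ ++ [(b, v, ρ τ b v)]) (cp ++ [true]) (cp ++ [true]) pos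
     | ⟨.choice, f⟩, d' => pm ρ (f d') τ pp (cp ++ [d']) pos
     | _, _ => 0)

/-- Pointwise (possibly infinite) sum of a family of heaps. -/
noncomputable def hSum {B V Pl ι : Type} (f : ι → Heap B V Pl) : Heap B V Pl :=
  fun c => ⨆ F : Finset ι, ∑ i ∈ F, f i c

/-- The canonical model construction `gmod(P, ρ, τ, ppos, cpos)`: the multiset
sum of `pm(P, ρ, τ, ppos, cpos, pos)` over all positions `pos`. -/
noncomputable def gmod {B V : Type} (ρ : List (B × V × V) → B → V → V)
    (P : Proc B V) (τ : List (B × V × V)) (pp cp : List Bool) :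
    Heap B V (List Bool) :=
  hSum (fun pos : List Bool => pm ρ P τ pp cp pos)

/-- Well-typedness of an input schedule. -/
def schedWT {B V : Type} (Ty : B → V → Set V) (ρ : List (B × V × V) → B → V → V) : Prop :=
  ∀ τ b v, ρ τ b v ∈ Ty b v

/-- The canonical model `cmod(P, ρ) = gmod(P, ρ, [], [], [])`. -/
noncomputable def cmod {B V : Type} (ρ : List (B × V × V) → B → V → V) (P : Proc B V) :
    Heap B V (List Bool) :=
  gmod ρ P [] [] []

/-- The canonical model with a token added at the previous place. -/
noncomputable def gmodTok {B V : Type} (ρ : List (B × V × V) → B → V → V)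
    (P : Proc B V) (τ : List (B × V × V)) (pp cp : List Bool) :
    Heap B V (List Bool) :=
  Heap.single (Chunk.token pp) + gmod ρ P τ pp cp

/-- The set `can(P)` of token-added canonical models over all well-typed schedules. -/
def canSet {B V : Type} (Ty : B → V → Set V) (P : Proc B V) :
    Set (Heap B V (List Bool)) :=
  {h | ∃ ρ, schedWT Ty ρ ∧ h = Heap.single (Chunk.token []) + cmod ρ P}

/-- The set of source places of I/O permissions in a heap. -/
def srcplaces {B V Pl : Type} (h : Heap B V Pl) : Set Pl :=
  {t | ∃ b v w t', 0 < h (Chunk.bio b t v w t')}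

/-- A heap is dead for a position if it has no tokens and no source place
extending the position. -/
def deadFor {B V : Type} (pos : List Bool) (h : Heap B V (List Bool)) : Prop :=
  (∀ t, h (Chunk.token t) = 0) ∧ ∀ p' ∈ srcplaces h, ¬ pos <+: p'

open Classical in
/-- The witness schedule `ρwit(σ)`: for proper prefixes `τ` of `σ`, return the
input of the next matching action of `σ`; otherwise an arbitrary well-typed value
(given by `pick`). -/
noncomputable def rhoWit {B V : Type} (pick : B → V → V) (σ : List (B × V × V)) :
    List (B × V × V) → B → V → V :=
  fun τ b v =>
    if h : ∃ w, ∃ rest, τ <+: σ ∧ σ.drop τ.length = (b, v, w) :: rest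
    then h.choose
    else pick b v

/-! ## Auxiliary infrastructure for the proof -/

section CanProof

/-- Head-recursion form of multi-step transitions. -/
inductive MtransH {S E : Type} (M : ES S E) : S → List E → S → Prop
  | nil (s : S) : MtransH M s [] s
  | cons {s s₁ s' : S} {e : E} {τ : List E} :
      M.trans s e s₁ → MtransH M s₁ τ s' → MtransH M s (e :: τ) s'

theorem MtransH.snoc {S E : Type} {M : ES S E} {s s' s'' : S} {τ : List E} {e : E}
    (h : MtransH M s τ s') (h2 : M.trans s' e s'') : MtransH M s (τ ++ [e]) s'' := by
  induction h with
  | nil => exact .cons h2 (.nil _)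
  | cons h1 _ ih => exact .cons h1 (ih h2)

theorem mtrans_toH {S E : Type} {M : ES S E} {s s' : S} {τ : List E}
    (h : M.mtrans s τ s') : MtransH M s τ s' := by
  induction h with
  | nil => exact .nil _
  | snoc _ h2 ih => exact ih.snoc h2

theorem mtrans_cons {S E : Type} {M : ES S E} {s s₁ s' : S} {e : E} {τ : List E}
    (h1 : M.trans s e s₁) (h2 : M.mtrans s₁ τ s') : M.mtrans s (e :: τ) s' := by
  revert h1
  induction h2 with
  | nil =>
      intro h1
      simpa using ES.mtrans.snoc (ES.mtrans.nil s) h1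
  | snoc _ hstep ih =>
      intro h1
      exact ES.mtrans.snoc (ih h1) hstep

theorem mtransH_toM {S E : Type} {M : ES S E} {s s' : S} {τ : List E}
    (h : MtransH M s τ s') : M.mtrans s τ s' := by
  induction h with
  | nil s => exact .nil s
  | cons h1 _ ih => exact mtrans_cons h1 ih

/-! ### hSum lemmas -/

theorem hSum_pos {B V Pl ι : Type} {f : ι → Heap B V Pl} {c : Chunk B V Pl}
    (h : 0 < hSum f c) : ∃ i, 0 < f i c := by
  by_contra hc
  push_neg at hc
  have hz : ∀ i, f i c = 0 := fun i => le_antisymm (hc i) zero_le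
  have : hSum f c = 0 := by
    refine le_antisymm (iSup_le fun F => ?_) zero_le
    rw [Finset.sum_eq_zero fun i _ => hz i]
  rw [this] at h
  exact lt_irrefl _ h

theorem hSum_eq_zero {B V Pl ι : Type} {f : ι → Heap B V Pl} {c : Chunk B V Pl}
    (h : ∀ i, f i c = 0) : hSum f c = 0 := by
  refine le_antisymm (iSup_le fun F => ?_) zero_le
  rw [Finset.sum_eq_zero fun i _ => h i]

private theorem ins_inj (path : List Bool) :
    Function.Injective (fun q : List Bool => path ++ true :: q) := by
  intro a b h
  simpa using h

theorem hSum_cons_le {B V Pl : Type} (f : List Bool → Heap B V Pl) (path : List Bool)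
    (c : Chunk B V Pl) :
    f path c + hSum (fun q => f (path ++ true :: q)) c ≤ hSum f c := by
  simp only [hSum]
  rw [ENat.add_iSup]
  refine iSup_le fun F => ?_
  have hnot : path ∉ F.map ⟨fun q => path ++ true :: q, ins_inj path⟩ := by
    simp only [Finset.mem_map, Function.Embedding.coeFn_mk, not_exists]
    rintro q ⟨-, hq⟩
    have := congrArg List.length hq
    simp at this
  calc f path c + ∑ q ∈ F, f (path ++ true :: q) c
      = ∑ p ∈ insert path (F.map ⟨fun q => path ++ true :: q, ins_inj path⟩), f p c := by
        rw [Finset.sum_insert hnot, Finset.sum_map]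
        rfl
    _ ≤ ⨆ F' : Finset (List Bool), ∑ p ∈ F', f p c :=
        le_iSup (fun F' : Finset (List Bool) => ∑ p ∈ F', f p c) _

theorem hSum_le_reindex {B V Pl : Type} (f : List Bool → Heap B V Pl) (path : List Bool)
    (c : Chunk B V Pl) (h0 : ∀ p, (∀ q, p ≠ path ++ true :: q) → f p c = 0) :
    hSum f c ≤ hSum (fun q => f (path ++ true :: q)) c := by
  simp only [hSum]
  refine iSup_le fun F => ?_
  have hside : ∀ x ∈ F, x ∉ Set.range (fun q : List Bool => path ++ true :: q) →
      (fun p => f p c) x = 0 := by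
    intro x _ hx
    exact h0 x fun q hq => hx ⟨q, hq.symm⟩
  rw [← Finset.sum_preimage (fun q : List Bool => path ++ true :: q) F
    ((ins_inj path).injOn) (fun p => f p c) hside]
  exact le_iSup (fun F' : Finset (List Bool) => ∑ q ∈ F', f (path ++ true :: q) c) _

end CanProof
section CanProof2

variable {B V : Type}

/-- Choice paths in a process leading to a prefix node. -/
inductive ChPath : Proc B V → List Bool → B → V → (V → Proc B V) → Prop
  | pre {P : Proc B V} {b : B} {v : V} {k : V → Proc B V} :
      PFunctor.M.dest P = ⟨.pre b v, k⟩ → ChPath P [] b v k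
  | step {P : Proc B V} {f : Bool → Proc B V} {d : Bool} {pos : List Bool} {b : B} {v : V}
      {k : V → Proc B V} :
      PFunctor.M.dest P = ⟨.choice, f⟩ → ChPath (f d) pos b v k → ChPath P (d :: pos) b v k

theorem ChPath.ptrans {Ty : B → V → Set V} {P : Proc B V} {path : List Bool} {b : B} {v : V}
    {k : V → Proc B V} (h : ChPath P path b v k) {w : V} (hw : w ∈ Ty b v) :
    PTrans Ty P (b, v, w) (k w) := by
  induction h with
  | pre hd => exact .pref hw hd
  | @step P f d pos b v k hd _ ih =>
      cases d
      · exact .chr hd (ih hw)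
      · exact .chl hd (ih hw)

theorem pm_char {ρ : List (B × V × V) → B → V → V} :
    ∀ (pos : List Bool) (P : Proc B V) (τ : List (B × V × V)) (pp cp : List Bool)
      (c : Chunk B V (List Bool)), pp <+: cp → 0 < pm ρ P τ pp cp pos c →
      ∃ b s v w t₁, c = Chunk.bio b s v w t₁ ∧
        ((s = pp ∧ ∃ k, ChPath P pos b v k ∧ w = ρ τ b v ∧ t₁ = cp ++ pos ++ [true]) ∨
          ∃ r, r ≠ [] ∧ r <+: pos ∧ s = cp ++ r) := by
  intro pos
  induction pos with
  | nil =>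
      intro P τ pp cp c hpre hpos
      rcases hP : PFunctor.M.dest P with ⟨hd, ks⟩
      cases hd with
      | null => simp [pm, hP] at hpos
      | pre b v =>
          simp only [pm, hP, Heap.single] at hpos
          split at hpos
          · rename_i hc
            exact ⟨b, pp, v, ρ τ b v, cp ++ [true], hc,
              .inl ⟨rfl, ks, .pre hP, rfl, by simp⟩⟩
          · simp at hpos
      | choice => simp [pm, hP] at hpos
  | cons d pos ih =>
      intro P τ pp cp c hpre hpos
      rcases hP : PFunctor.M.dest P with ⟨hd, ks⟩
      cases hd with
      | null => simp [pm, hP] at hpos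
      | pre b v =>
          cases d with
          | false => simp [pm, hP] at hpos
          | true =>
              simp only [pm, hP] at hpos
              obtain ⟨b₁, s, v₁, w₁, t₁, hc, hdisj⟩ :=
                ih _ _ (cp ++ [true]) (cp ++ [true]) c List.prefix_rfl hpos
              refine ⟨b₁, s, v₁, w₁, t₁, hc, .inr ?_⟩
              rcases hdisj with ⟨hs, -⟩ | ⟨r, hr, hrp, hs⟩
              · exact ⟨[true], by simp, ⟨pos, rfl⟩, hs⟩
              · obtain ⟨u, hu⟩ := hrp
                exact ⟨true :: r, by simp, ⟨u, by simp [hu]⟩, by simp [hs]⟩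
      | choice =>
          simp only [pm, hP] at hpos
          have hpre' : pp <+: cp ++ [d] := hpre.trans (List.prefix_append cp [d])
          obtain ⟨b₁, s, v₁, w₁, t₁, hc, hdisj⟩ := ih _ _ pp (cp ++ [d]) c hpre' hpos
          refine ⟨b₁, s, v₁, w₁, t₁, hc, ?_⟩
          rcases hdisj with ⟨hs, k, hck, hw, ht⟩ | ⟨r, hr, hrp, hs⟩
          · exact .inl ⟨hs, k, .step hP hck, hw, by simpa using ht⟩
          · obtain ⟨u, hu⟩ := hrp
            exact .inr ⟨d :: r, by simp, ⟨u, by simp [hu]⟩, by simp [hs]⟩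

theorem pm_chpath {ρ : List (B × V × V) → B → V → V} {P : Proc B V} {path : List Bool}
    {b : B} {v : V} {k : V → Proc B V} (h : ChPath P path b v k) :
    ∀ (τ : List (B × V × V)) (pp cp : List Bool),
      pm ρ P τ pp cp path = Heap.single (.bio b pp v (ρ τ b v) (cp ++ path ++ [true])) := by
  induction h with
  | pre hd => intro τ pp cp; simp [pm, hd]
  | @step P f d pos b v k hd _ ih =>
      intro τ pp cp
      simp only [pm, hd]
      rw [ih]
      simp

theorem pm_after {ρ : List (B × V × V) → B → V → V} {P : Proc B V} {path : List Bool}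
    {b : B} {v : V} {k : V → Proc B V} (h : ChPath P path b v k) :
    ∀ (τ : List (B × V × V)) (pp cp : List Bool) (q : List Bool),
      pm ρ P τ pp cp (path ++ true :: q) =
        pm ρ (k (ρ τ b v)) (τ ++ [(b, v, ρ τ b v)]) (cp ++ path ++ [true])
          (cp ++ path ++ [true]) q := by
  induction h with
  | pre hd => intro τ pp cp q; simp [pm, hd]
  | @step P f d pos b v k hd _ ih =>
      intro τ pp cp q
      show pm ρ P τ pp cp (d :: (pos ++ true :: q)) = _
      simp only [pm, hd]
      rw [ih]
      simp

theorem gmod_token {ρ : List (B × V × V) → B → V → V} {P : Proc B V}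
    {τ : List (B × V × V)} {t s : List Bool} : gmod ρ P τ t t (.token s) = 0 := by
  refine hSum_eq_zero fun pos => ?_
  by_contra hne
  obtain ⟨b₁, s₁, v₁, w₁, t₁, hc, -⟩ :=
    pm_char pos P τ t t _ List.prefix_rfl (pos_iff_ne_zero.mpr hne)
  cases hc

end CanProof2
section CanProof3

variable {B V : Type}

theorem htrans_some_inv {Pl : Type} {Ty : B → V → Set V} {h : Heap B V Pl}
    {a : B × V × V} {s' : Option (Heap B V Pl)} (H : HTrans Ty (some h) a s') :
    ∃ b v w w' t t' h₀, a = (b, v, w') ∧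
      h = Heap.single (.token t) + Heap.single (.bio b t v w t') + h₀ ∧ w' ∈ Ty b v ∧
      ((w = w' ∧ s' = some (Heap.single (.token t') + h₀)) ∨ (w ≠ w' ∧ s' = none)) := by
  cases H with
  | bio hw => exact ⟨_, _, _, _, _, _, _, rfl, rfl, hw, .inl ⟨rfl, rfl⟩⟩
  | contradict hne hw hw' => exact ⟨_, _, _, _, _, _, _, rfl, rfl, hw', .inr ⟨hne, rfl⟩⟩

theorem single_ne_top {Pl : Type} (ch c : Chunk B V Pl) : Heap.single ch c ≠ ⊤ := by
  simp only [Heap.single]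
  split <;> simp

theorem simul (Ty : B → V → Set V) (σfull : List (B × V × V))
    (ρ : List (B × V × V) → B → V → V)
    (hρ : ∀ σd b v w rest, σd ++ (b, v, w) :: rest = σfull → ρ σd b v = w) :
    ∀ (σrest σdone : List (B × V × V)) (P : Proc B V) (t : List Bool)
      (g : Heap B V (List Bool)) (s' : Option (Heap B V (List Bool))),
      σdone ++ σrest = σfull →
      (∀ s, g (.token s) = 0) →
      (∀ b s v w t₁, 0 < g (.bio b s v w t₁) → ¬ t <+: s) →
      MtransH (hES Ty) (some (Heap.single (.token t) + gmod ρ P σdone t t + g)) σrest s' →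
      ∃ P', MtransH (pES Ty) P σrest P' := by
  intro σrest
  induction σrest with
  | nil => exact fun σdone P t g s' _ _ _ _ => ⟨P, .nil P⟩
  | cons a rest ih =>
      intro σdone P t g s' hσ hgtok hgbio hstep
      cases hstep with
      | cons h1 h2 =>
        obtain ⟨b₀, v₀, w₀, w', t₀, t₁, h₀, ha, hH, hwt', hcase⟩ := htrans_some_inv h1
        -- Step 1 : the token place is t
        have ht₀ : t₀ = t := by
          by_contra hne
          have h1le : (1 : ℕ∞) ≤ ((Heap.single (Chunk.token t₀) +
              Heap.single (Chunk.bio b₀ t₀ v₀ w₀ t₁) + h₀ :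
                Heap B V (List Bool))) (Chunk.token t₀) := by
            simp only [Pi.add_apply, Heap.single, if_pos rfl]
            exact le_add_right (le_add_right le_rfl)
          rw [← hH] at h1le
          simp only [Pi.add_apply, gmod_token, hgtok, Heap.single] at h1le
          rw [if_neg (fun hc : Chunk.token t₀ = Chunk.token t => hne (by injection hc))] at h1le
          simp at h1le
        rw [ht₀] at hH
        clear ht₀
        -- pointwise cancelled heap equation
        have E : ∀ c, gmod ρ P σdone t t c + g c =
            Heap.single (.bio b₀ t v₀ w₀ t₁) c + h₀ c := by
          intro c
          have hEc := congrFun hH c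
          simp only [Pi.add_apply] at hEc
          rw [add_assoc, add_assoc] at hEc
          exact WithTop.add_left_cancel (single_ne_top _ c) hEc
        -- Step 2 : decode the consumed chunk
        have hchunk : 0 < gmod ρ P σdone t t (.bio b₀ t v₀ w₀ t₁) := by
          have hEc := E (.bio b₀ t v₀ w₀ t₁)
          have hg0 : g (.bio b₀ t v₀ w₀ t₁) = 0 := by
            by_contra hg
            exact hgbio _ _ _ _ _ (pos_iff_ne_zero.mpr hg) List.prefix_rfl
          rw [hg0, add_zero] at hEc
          rw [hEc]
          simp only [Heap.single, if_pos rfl]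
          exact lt_of_lt_of_le zero_lt_one le_self_add
        obtain ⟨pos, hpos⟩ := hSum_pos hchunk
        obtain ⟨b₁, s₁, v₁, w₁, t₁'', hc, hdisj⟩ :=
          pm_char pos P σdone t t _ List.prefix_rfl hpos
        injection hc with e1 e2 e3 e4 e5
        subst e1; subst e2; subst e3; subst e4; subst e5
        rcases hdisj with ⟨-, k, hck, hw0, ht₁⟩ | ⟨r, hr, -, hs⟩
        swap
        · exact absurd ((List.append_right_eq_self).mp hs.symm) hr
        -- Step 3 : schedule consistency forces w₀ = w'
        have hw' : ρ σdone b₀ v₀ = w' := by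
          refine hρ σdone b₀ v₀ w' rest ?_
          rw [ha] at hσ; exact hσ
        have hww : w₀ = w' := hw0.trans hw'
        rcases hcase with ⟨-, hs₁⟩ | ⟨hnew, -⟩
        swap
        · exact absurd hww hnew
        subst hww
        subst ha
        -- Step 4 : rebuild the invariant heap
        set σ' : List (B × V × V) := σdone ++ [(b₀, v₀, w₀)] with hσ'
        set f : List Bool → Heap B V (List Bool) := fun p => pm ρ P σdone t t p with hf
        have Fpath : f pos = Heap.single (.bio b₀ t v₀ w₀ t₁) := by
          show pm ρ P σdone t t pos = _
          rw [pm_chpath hck, ← hw0, ← ht₁]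
        have Fsub : (fun q => f (pos ++ true :: q)) =
            fun q => pm ρ (k w₀) σ' t₁ t₁ q := by
          funext q
          show pm ρ P σdone t t (pos ++ true :: q) = _
          rw [pm_after hck, ← hw0, ← ht₁]
        have hgsub : ∀ c, gmod ρ (k w₀) σ' t₁ t₁ c =
            hSum (fun q => f (pos ++ true :: q)) c := by
          intro c
          rw [gmod, Fsub]
        -- G1 : the continuation model is below h₀
        have G1 : ∀ c, gmod ρ (k w₀) σ' t₁ t₁ c ≤ h₀ c := by
          intro c
          have hle : Heap.single (.bio b₀ t v₀ w₀ t₁) c + gmod ρ (k w₀) σ' t₁ t₁ c ≤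
              Heap.single (.bio b₀ t v₀ w₀ t₁) c + h₀ c := by
            rw [hgsub]
            calc Heap.single (.bio b₀ t v₀ w₀ t₁) c + hSum (fun q => f (pos ++ true :: q)) c
                = f pos c + hSum (fun q => f (pos ++ true :: q)) c := by rw [Fpath]
              _ ≤ hSum f c := hSum_cons_le f pos c
              _ = gmod ρ P σdone t t c := rfl
              _ ≤ gmod ρ P σdone t t c + g c := le_self_add
              _ = Heap.single (.bio b₀ t v₀ w₀ t₁) c + h₀ c := E c
          exact (WithTop.add_le_add_iff_left (single_ne_top _ c)).mp hle
        set g' : Heap B V (List Bool) := fun c => h₀ c - gmod ρ (k w₀) σ' t₁ t₁ c with hg'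
        have G2 : Heap.single (Chunk.token t₁) + h₀ =
            Heap.single (Chunk.token t₁) + gmod ρ (k w₀) σ' t₁ t₁ + g' := by
          funext c
          simp only [Pi.add_apply, hg', add_assoc]
          rw [add_tsub_cancel_of_le (G1 c)]
        have h₀tok : ∀ s, h₀ (.token s) = 0 := by
          intro s
          have hEc := E (.token s)
          rw [gmod_token, hgtok, Heap.single, if_neg (by simp)] at hEc
          simpa using hEc.symm
        have G3 : ∀ s, g' (.token s) = 0 := by
          intro s
          simp only [hg', h₀tok]
          exact zero_tsub _
        have G4 : ∀ b s v w t₂, 0 < g' (.bio b s v w t₂) → ¬ t₁ <+: s := by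
          intro b s v w t₂ hpos' hpre
          have hle2 : h₀ (.bio b s v w t₂) ≤ gmod ρ (k w₀) σ' t₁ t₁ (.bio b s v w t₂) := by
            have hcne : (Chunk.bio b s v w t₂ : Chunk B V (List Bool)) ≠
                .bio b₀ t v₀ w₀ t₁ := by
              intro hcc
              injection hcc with x1 x2 x3 x4 x5
              rw [x2] at hpre
              have hlen := hpre.length_le
              rw [ht₁] at hlen
              simp at hlen
            have hg0 : g (.bio b s v w t₂) = 0 := by
              by_contra hg
              refine hgbio _ _ _ _ _ (pos_iff_ne_zero.mpr hg) ?_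
              refine (List.prefix_append t (pos ++ [true])).trans ?_
              rw [← List.append_assoc, ← ht₁]
              exact hpre
            have hEc := E (.bio b s v w t₂)
            rw [hg0, add_zero] at hEc
            rw [Heap.single, if_neg hcne, zero_add] at hEc
            rw [← hEc, hgsub]
            refine hSum_le_reindex f pos _ ?_
            intro p hp
            by_contra hfp
            obtain ⟨b₂, s₂, v₂, w₂, t₂', hc2, hdisj2⟩ :=
              pm_char p P σdone t t _ List.prefix_rfl (pos_iff_ne_zero.mpr hfp)
            injection hc2 with y1 y2 y3 y4 y5
            subst y1; subst y2; subst y3; subst y4; subst y5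
            rcases hdisj2 with ⟨hst, -⟩ | ⟨r, -, hrp, hs⟩
            · rw [hst] at hpre
              have hlen := hpre.length_le
              rw [ht₁] at hlen
              simp at hlen
            · rw [hs, ht₁, List.append_assoc] at hpre
              have hpr : pos ++ [true] <+: r := (List.prefix_append_right_inj t).mp hpre
              obtain ⟨u, hu⟩ := hpr.trans hrp
              exact hp u (by rw [← hu]; simp)
          have hz : g' (.bio b s v w t₂) = 0 := by
            simp only [hg']
            exact tsub_eq_zero_of_le hle2
          rw [hz] at hpos'
          exact lt_irrefl _ hpos'
        -- apply IH
        rw [hs₁, G2] at h2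
        obtain ⟨P', hP'⟩ := ih σ' (k w₀) t₁ g' s'
          (by rw [hσ', List.append_assoc]; exact hσ) G3 G4 h2
        exact ⟨P', .cons (hck.ptrans hwt') hP'⟩

end CanProof3
section CanProof4

variable {B V : Type}

theorem run_wt {Pl : Type} {Ty : B → V → Set V} {s s' : Option (Heap B V Pl)}
    {τ : List (B × V × V)} (h : (hES Ty).mtrans s τ s') :
    ∀ a ∈ τ, a.2.2 ∈ Ty a.1 a.2.1 := by
  induction h with
  | nil => simp
  | snoc _ h2 ih =>
      intro a ha
      rw [List.mem_append] at ha
      rcases ha with ha | ha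
      · exact ih a ha
      · rw [List.mem_singleton] at ha
        subst ha
        cases h2 with
        | bio hw => exact hw
        | contradict _ _ hw' => exact hw'
        | chaos hw => exact hw

end CanProof4
/-- Every trace of the set of canonical models of a process `P` is a trace of
`P`: `tracesH(can(P)) ⊆ traces(P)`. -/
theorem can_traces_subset_proc {B V : Type} (Ty : B → V → Set V)
    (hne : ∀ b v, (Ty b v).Nonempty) (P : Proc B V) :
    tracesH Ty (canSet Ty P) ⊆ (pES Ty).tracesFrom P := by
  classical
  intro σ hσ
  set pick : B → V → V := fun b v => (hne b v).some with hpick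
  -- the constant schedule is well typed, so `canSet` is nonempty
  have hρ0 : schedWT Ty (fun _ b v => pick b v) := fun τ b v => (hne b v).some_mem
  obtain ⟨s0, hs0, sf0, hrun0⟩ := hσ _ ⟨_, hρ0, rfl⟩
  rw [Set.mem_singleton_iff] at hs0
  subst hs0
  -- every action of σ is well typed
  have hwtτ : ∀ a ∈ σ, a.2.2 ∈ Ty a.1 a.2.1 := run_wt hrun0
  -- the witness schedule
  set ρ : List (B × V × V) → B → V → V := rhoWit pick σ with hρdef
  have hwtρ : schedWT Ty ρ := by
    intro τ b v
    rw [hρdef, rhoWit]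
    split
    · rename_i hex
      obtain ⟨rest, hpre, hdrop⟩ := hex.choose_spec
      have hmem : ∀ (x : B × V × V) rest', σ.drop τ.length = x :: rest' → x ∈ σ := by
        intro x rest' hd
        refine List.mem_of_mem_drop (l := σ) (i := τ.length) ?_
        rw [hd]
        exact List.mem_cons_self
      exact hwtτ _ (hmem _ _ hdrop)
    · exact (hne b v).some_mem
  have hcons : ∀ σd b v w rest, σd ++ (b, v, w) :: rest = σ → ρ σd b v = w := by
    intro σd b v w rest heq
    have hex : ∃ w', ∃ rest', σd <+: σ ∧ σ.drop σd.length = (b, v, w') :: rest' := by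
      refine ⟨w, rest, ⟨(b, v, w) :: rest, heq⟩, ?_⟩
      rw [← heq, List.drop_left]
    rw [hρdef, rhoWit, dif_pos hex]
    obtain ⟨rest', hpre, hdrop⟩ := hex.choose_spec
    have hdrop2 : σ.drop σd.length = (b, v, w) :: rest := by
      rw [← heq, List.drop_left]
    have hcmp := hdrop2.symm.trans hdrop
    injection hcmp with h1 h2
    have := congrArg (fun p : B × V × V => p.2.2) h1
    simpa using this.symm
  -- run σ in the canonical model at the witness schedule
  obtain ⟨s1, hs1, sf, hrun⟩ := hσ _ ⟨ρ, hwtρ, rfl⟩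
  rw [Set.mem_singleton_iff] at hs1
  subst hs1
  have hrunH := mtrans_toH hrun
  have hrunH' : MtransH (hES Ty)
      (some (Heap.single (.token ([] : List Bool)) + gmod ρ P [] [] [] +
        (0 : Heap B V (List Bool)))) σ sf := by
    rw [add_zero]
    exact hrunH
  obtain ⟨P', hP'⟩ := simul Ty σ ρ hcons σ [] P [] 0 sf rfl (fun s => rfl)
    (fun b s v w t₁ h => absurd h (by simp)) hrunH'
  exact ⟨P, rfl, P', mtransH_toM hP'⟩
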